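/- arXiv:2605.28610 — 3 statements merged into one kernel-verified Lean document; each statement's English description precedes it below -/
import Mathlib

section
/- For every integer p ≥ 1 and every complex number s with Re s > 1, ζ(s) = ((s)_p / (p−1)!) · ∫_{1}^{∞} ( ∑_{n=1}^{⌊x⌋} (x−n)^{p−1} ) / x^{s+p} dx, where the inner sum over n runs over the positive integers n ≤ x. -/
open MeasureTheory Set Filter Polynomial Topology

lemma myCpowDeriv (c : ℂ) {x : ℝ} (hx : 0 < x) :
    HasDerivAt (fun y : ℝ => (y : ℂ) ^ c) (c * (x : ℂ) ^ (c - 1)) x := by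
  have hm : ((x:ℝ):ℂ) ∈ Complex.slitPlane := by
    rw [Complex.mem_slitPlane_iff]
    exact Or.inl (by simpa using hx)
  have h := (Complex.hasStrictDerivAt_cpow_const (c := c) hm).hasDerivAt.comp_ofReal
  exact h

lemma myIntegrable {c : ℝ} (hc : 0 < c) (k : ℕ) {a : ℂ} (ha : (k : ℝ) + a.re < -1) :
    IntegrableOn (fun x : ℝ => ((x : ℂ) - c) ^ k * (x : ℂ) ^ a) (Ioi c) := by
  have hg : IntegrableOn (fun x : ℝ => x ^ ((k : ℝ) + a.re)) (Ioi c) :=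
    integrableOn_Ioi_rpow_of_lt ha hc
  refine hg.mono' ?_ ?_
  · refine (ContinuousOn.aestronglyMeasurable ?_ measurableSet_Ioi)
    intro x hx
    have h1 : ContinuousAt (fun x : ℝ => ((x : ℂ) - c) ^ k) x := by fun_prop
    have h2 : ContinuousAt (fun x : ℝ => (x : ℂ) ^ a) x :=
      Complex.continuousAt_ofReal_cpow_const x a (Or.inr (hc.trans hx).ne')
    exact (h1.mul h2).continuousWithinAt
  · filter_upwards [ae_restrict_mem measurableSet_Ioi] with x hx
    have hxc : c < x := hx
    have hx0 : 0 < x := hc.trans hxc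
    rw [norm_mul, norm_pow]
    have e1 : ‖(x : ℂ) - (c : ℂ)‖ = x - c := by
      rw [← Complex.ofReal_sub, Complex.norm_real, Real.norm_of_nonneg (by linarith [hxc.le])]
    have e2 : ‖(x : ℂ) ^ a‖ = x ^ a.re := by
      rw [Complex.norm_cpow_eq_rpow_re_of_pos hx0]
    rw [e1, e2]
    calc (x - c) ^ k * x ^ a.re ≤ x ^ k * x ^ a.re := by
          gcongr
          · linarith
      _ = x ^ ((k : ℝ) + a.re) := by
          rw [Real.rpow_add hx0, Real.rpow_natCast]

lemma myKey {s : ℂ} (hs : 1 < s.re) (k : ℕ) {c : ℝ} (hc : 0 < c) :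
    (ascPochhammer ℂ (k + 1)).eval s *
      ∫ x in Ioi c, ((x : ℂ) - c) ^ k * (x : ℂ) ^ (-s - k - 1) =
      (Nat.factorial k : ℂ) * (c : ℂ) ^ (-s) := by
  have hs0 : s ≠ 0 := fun h => by simp [h] at hs; linarith
  induction k with
  | zero =>
      have hre : (-s - 1).re < -1 := by
        simp only [Complex.sub_re, Complex.neg_re, Complex.one_re]
        linarith
      simp only [Nat.cast_zero, pow_zero, one_mul, sub_zero, Nat.factorial_zero,
        Nat.cast_one, zero_add]
      rw [integral_Ioi_cpow_of_lt hre hc]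
      have : -s - 1 + 1 = -s := by ring
      rw [this]
      simp only [ascPochhammer_one, eval_X]
      field_simp
  | succ k ih =>
      have hk1 : ((k : ℝ)) + (-s - k - 1).re < -1 := by
        simp only [Complex.sub_re, Complex.neg_re, Complex.natCast_re, Complex.one_re]
        linarith
      have hk2 : (((k + 1 : ℕ)) : ℝ) + (-s - k - 2).re < -1 := by
        simp only [Complex.sub_re, Complex.neg_re, Complex.natCast_re, Complex.re_ofNat,
          Nat.cast_add, Nat.cast_one]
        linarith
      have i1 := myIntegrable hc k hk1
      have i2 := myIntegrable hc (k + 1) hk2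
      set g : ℝ → ℂ := fun x => ((x : ℂ) - c) ^ (k + 1) * (x : ℂ) ^ (-s - k - 1) with hg
      set g' : ℝ → ℂ := fun x =>
        ((k : ℂ) + 1) * (((x : ℂ) - c) ^ k * (x : ℂ) ^ (-s - k - 1)) +
          (-s - k - 1) * (((x : ℂ) - c) ^ (k + 1) * (x : ℂ) ^ (-s - k - 2)) with hg'
      have hder : ∀ x ∈ Ioi c, HasDerivAt g (g' x) x := by
        intro x hx
        have hx0 : 0 < x := hc.trans hx
        have h0 : HasDerivAt (fun y : ℝ => (y : ℂ)) 1 x := Complex.ofRealCLM.hasDerivAt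
        have hu0 : HasDerivAt (fun z : ℂ => (z - c) ^ (k + 1))
          (((k + 1 : ℕ) : ℂ) * ((x : ℂ) - c) ^ (k + 1 - 1) * 1) (x : ℝ) :=
          ((hasDerivAt_id ((x : ℝ) : ℂ)).sub_const (c : ℂ)).pow (k + 1)
        have hu := hu0.comp_ofReal
        have hv := myCpowDeriv (-s - k - 1) hx0
        have := hu.mul hv
        convert this using 1
        · rfl
        · rfl
        simp only [hg', Nat.add_sub_cancel, mul_one]
        rw [show -s - (k : ℂ) - 1 - 1 = -s - k - 2 by ring]
        push_cast
        ring
      have hint : IntegrableOn g' (Ioi c) := by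
        exact (i1.const_mul _).add (i2.const_mul _)
      have htend : Tendsto g atTop (𝓝 0) := by
        apply squeeze_zero_norm' (a := fun x : ℝ => x ^ (-s.re))
        · filter_upwards [eventually_gt_atTop (max c 1)] with x hx
          have hxc : c < x := (le_max_left c 1).trans_lt hx
          have hx0 : (0 : ℝ) < x := lt_of_le_of_lt (by positivity) hx
          have hx1 : (1 : ℝ) ≤ x := ((le_max_right c 1).trans_lt hx).le
          simp only [hg, norm_mul, norm_pow]
          have e1 : ‖(x : ℂ) - (c : ℂ)‖ = x - c := by
            rw [← Complex.ofReal_sub, Complex.norm_real,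
              Real.norm_of_nonneg (by linarith)]
          have e2 : ‖(x : ℂ) ^ (-s - k - 1)‖ = x ^ (-s.re - k - 1) := by
            rw [Complex.norm_cpow_eq_rpow_re_of_pos hx0]
            norm_num
          rw [e1, e2]
          calc (x - c) ^ (k + 1) * x ^ (-s.re - k - 1)
              ≤ x ^ (k + 1) * x ^ (-s.re - k - 1) := by
                gcongr
                · linarith
            _ = x ^ (-s.re) := by
                rw [← Real.rpow_natCast x (k + 1), ← Real.rpow_add hx0]
                congr 1
                push_cast
                ring
        · exact tendsto_rpow_neg_atTop (by linarith)
      have hcont : ContinuousWithinAt g (Ici c) c := by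
        apply ContinuousAt.continuousWithinAt
        have h1 : ContinuousAt (fun x : ℝ => ((x : ℂ) - c) ^ (k + 1)) c := by fun_prop
        have h2 : ContinuousAt (fun x : ℝ => (x : ℂ) ^ (-s - k - 1)) c :=
          Complex.continuousAt_ofReal_cpow_const c _ (Or.inr hc.ne')
        exact h1.mul h2
      have heq := integral_Ioi_of_hasDerivAt_of_tendsto hcont hder hint htend
      have hgc : g c = 0 := by simp [hg]
      rw [hgc, sub_zero] at heq
      rw [hg'] at heq
      rw [MeasureTheory.integral_add (i1.const_mul _) (i2.const_mul _),
        MeasureTheory.integral_const_mul, MeasureTheory.integral_const_mul] at heq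
      rw [show (-s - ((k + 1 : ℕ) : ℂ) - 1) = -s - k - 2 by push_cast; ring]
      rw [ascPochhammer_succ_eval]
      rw [Nat.factorial_succ]
      push_cast
      linear_combination ((k : ℂ) + 1) * ih - (ascPochhammer ℂ (k + 1)).eval s * heq

lemma myPochNe {s : ℂ} (hs : 0 < s.re) : ∀ m : ℕ, (ascPochhammer ℂ m).eval s ≠ 0
  | 0 => by simp
  | (m + 1) => by
      rw [ascPochhammer_succ_eval]
      refine mul_ne_zero (myPochNe hs m) fun h => ?_
      have := congrArg Complex.re h
      simp only [Complex.add_re, Complex.natCast_re, Complex.zero_re] at this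
      have hm : (0 : ℝ) ≤ (m : ℝ) := Nat.cast_nonneg m
      linarith

theorem zeta_eq_pochhammer_integral (p : ℕ) (hp : 1 ≤ p) (s : ℂ) (hs : 1 < s.re) :
    riemannZeta s =
      (ascPochhammer ℂ p).eval s / ((p - 1).factorial : ℂ) *
        ∫ x in Set.Ioi (1 : ℝ),
          (∑ n ∈ Finset.Icc 1 ⌊x⌋, ((x : ℂ) - (n : ℂ)) ^ (p - 1)) / (x : ℂ) ^ (s + p) := by
  obtain ⟨k, rfl⟩ : ∃ k, p = k + 1 := ⟨p - 1, by omega⟩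
  simp only [Nat.add_sub_cancel]
  have hs0 : 0 < s.re := by linarith
  have hne : (ascPochhammer ℂ (k + 1)).eval s ≠ 0 := myPochNe hs0 _
  have hre : ((k : ℝ)) + (-s - (k : ℂ) - 1).re < -1 := by
    simp only [Complex.sub_re, Complex.neg_re, Complex.natCast_re, Complex.one_re]
    linarith
  set f : ℕ → ℝ → ℂ := fun n x =>
    ((x : ℂ) - (((n + 1 : ℕ) : ℝ) : ℂ)) ^ k * (x : ℂ) ^ (-s - k - 1) with hf
  set F : ℕ → ℝ → ℂ := fun n => Set.indicator (Ici ((n + 1 : ℕ) : ℝ)) (f n) with hF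
  have hcpos : ∀ n : ℕ, (0 : ℝ) < ((n + 1 : ℕ) : ℝ) := fun n => by positivity
  have hIoi : ∀ n : ℕ, IntegrableOn (f n) (Ioi ((n + 1 : ℕ) : ℝ)) volume := fun n =>
    myIntegrable (hcpos n) k hre
  have hIci : ∀ n : ℕ, IntegrableOn (f n) (Ici ((n + 1 : ℕ) : ℝ)) volume := fun n => by
    rw [integrableOn_Ici_iff_integrableOn_Ioi]; exact hIoi n
  have hFint : ∀ n : ℕ, Integrable (F n) (volume.restrict (Ioi (1 : ℝ))) := fun n =>
    ((hIci n).integrable_indicator measurableSet_Ici).integrableOn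
  have haeEq : ∀ n : ℕ,
      (Ici ((n + 1 : ℕ) : ℝ) ∩ Ioi 1 : Set ℝ) =ᵐ[volume] (Ioi ((n + 1 : ℕ) : ℝ) : Set ℝ) := by
    intro n
    have h1 : (Ici ((n + 1 : ℕ) : ℝ) : Set ℝ) =ᵐ[volume] Ioi ((n + 1 : ℕ) : ℝ) :=
      (Ioi_ae_eq_Ici (a := ((n + 1 : ℕ) : ℝ)) (μ := volume)).symm
    have h2 := h1.inter (EventuallyEq.refl _ (Ioi (1 : ℝ) : Set ℝ))
    have h3 : (Ioi ((n + 1 : ℕ) : ℝ) ∩ Ioi 1 : Set ℝ) = Ioi ((n + 1 : ℕ) : ℝ) := by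
      rw [Ioi_inter_Ioi, max_eq_left]
      exact_mod_cast Nat.one_le_iff_ne_zero.mpr (Nat.succ_ne_zero n)
    rw [h3] at h2
    exact h2
  have hsetEq : ∀ n : ℕ, ∫ x in Ioi (1 : ℝ), F n x = ∫ x in Ioi ((n + 1 : ℕ) : ℝ), f n x := by
    intro n
    rw [hF]
    rw [MeasureTheory.integral_indicator measurableSet_Ici,
      Measure.restrict_restrict measurableSet_Ici]
    exact setIntegral_congr_set (haeEq n)
  have hnormle : ∀ n : ℕ, ∫ x in Ioi (1 : ℝ), ‖F n x‖ ≤ ((n + 1 : ℕ) : ℝ) ^ (-s.re) / s.re := by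
    intro n
    have e : (fun x : ℝ => ‖F n x‖) =
        Set.indicator (Ici ((n + 1 : ℕ) : ℝ)) (fun x => ‖f n x‖) := by
      funext x
      exact norm_indicator_eq_indicator_norm (f n) x
    rw [e, MeasureTheory.integral_indicator measurableSet_Ici,
      Measure.restrict_restrict measurableSet_Ici, setIntegral_congr_set (haeEq n)]
    have hb : ∫ x in Ioi ((n + 1 : ℕ) : ℝ), ‖f n x‖ ≤
        ∫ x in Ioi ((n + 1 : ℕ) : ℝ), x ^ (-s.re - 1) := by
      apply setIntegral_mono_on (hIoi n).norm
        (integrableOn_Ioi_rpow_of_lt (by linarith) (hcpos n)) measurableSet_Ioi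
      intro x hx
      have hxc : ((n + 1 : ℕ) : ℝ) < x := hx
      have hx0 : 0 < x := (hcpos n).trans hxc
      rw [hf]
      simp only [norm_mul, norm_pow]
      have e1 : ‖(x : ℂ) - (((n + 1 : ℕ) : ℝ) : ℂ)‖ = x - ((n + 1 : ℕ) : ℝ) := by
        rw [← Complex.ofReal_sub, Complex.norm_real, Real.norm_of_nonneg (by linarith)]
      have e2 : ‖(x : ℂ) ^ (-s - k - 1)‖ = x ^ (-s.re - k - 1) := by
        rw [Complex.norm_cpow_eq_rpow_re_of_pos hx0]
        norm_num
      rw [e1, e2]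
      calc (x - ((n + 1 : ℕ) : ℝ)) ^ k * x ^ (-s.re - k - 1)
          ≤ x ^ k * x ^ (-s.re - k - 1) := by
            gcongr
            · linarith
        _ = x ^ (-s.re - 1) := by
            rw [← Real.rpow_natCast x k, ← Real.rpow_add hx0]
            congr 1
            ring
    have hv : ∫ x in Ioi ((n + 1 : ℕ) : ℝ), x ^ (-s.re - 1) =
        ((n + 1 : ℕ) : ℝ) ^ (-s.re) / s.re := by
      rw [integral_Ioi_rpow_of_lt (by linarith) (hcpos n)]
      rw [show -s.re - 1 + 1 = -s.re by ring]
      rw [div_eq_div_iff (by linarith) (by linarith)]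
      ring
    linarith
  have hsum : Summable fun n : ℕ => ∫ x in Ioi (1 : ℝ), ‖F n x‖ := by
    apply Summable.of_nonneg_of_le (fun n => integral_nonneg fun x => norm_nonneg _) hnormle
    have h1 : Summable fun n : ℕ => ((n : ℝ)) ^ (-s.re) :=
      Real.summable_nat_rpow.mpr (by linarith)
    have h2 := (summable_nat_add_iff 1).mpr h1
    exact h2.div_const s.re
  have hkey := MeasureTheory.integral_tsum_of_summable_integral_norm hFint hsum
  have hpt : ∀ x ∈ Ioi (1 : ℝ),
      (∑ n ∈ Finset.Icc 1 ⌊x⌋, ((x : ℂ) - (n : ℂ)) ^ k) / (x : ℂ) ^ (s + ((k + 1 : ℕ) : ℂ)) =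
        ∑' n : ℕ, F n x := by
    intro x hx
    have hx1 : (1 : ℝ) < x := hx
    have hx0 : (0 : ℝ) < x := by linarith
    have hfl0 : 0 ≤ ⌊x⌋ := Int.floor_nonneg.mpr (by linarith)
    have ht : ∑' n : ℕ, F n x = ∑ n ∈ Finset.range ⌊x⌋.toNat, F n x := by
      apply tsum_eq_sum
      intro n hn
      simp only [Finset.mem_range, not_lt] at hn
      rw [hF]
      apply Set.indicator_of_notMem
      simp only [mem_Ici, not_le]
      have h1 : x < ⌊x⌋ + 1 := Int.lt_floor_add_one x
      have h2 : ((⌊x⌋ : ℝ)) ≤ (⌊x⌋.toNat : ℝ) := by exact_mod_cast Int.self_le_toNat _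
      have h3 : ((⌊x⌋.toNat : ℝ)) ≤ (n : ℝ) := by exact_mod_cast hn
      push_cast
      linarith
    have hmem : ∀ n ∈ Finset.range ⌊x⌋.toNat, F n x = f n x := by
      intro n hn
      simp only [Finset.mem_range] at hn
      rw [hF]
      apply Set.indicator_of_mem
      simp only [mem_Ici]
      have h1 : (n + 1 : ℤ) ≤ ⌊x⌋ := by omega
      have h2 : ((⌊x⌋ : ℝ)) ≤ x := Int.floor_le x
      have : ((n : ℝ) + 1) ≤ (⌊x⌋ : ℝ) := by exact_mod_cast h1
      push_cast
      linarith
    have hmap : Finset.Icc (1 : ℤ) ⌊x⌋ =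
        Finset.map ⟨fun n : ℕ => (n : ℤ) + 1, (add_left_injective 1).comp Nat.cast_injective⟩
          (Finset.range ⌊x⌋.toNat) := by
      ext m
      simp only [Finset.mem_Icc, Finset.mem_map, Finset.mem_range,
        Function.Embedding.coeFn_mk]
      constructor
      · rintro ⟨h1, h2⟩
        exact ⟨(m - 1).toNat, by omega, by omega⟩
      · rintro ⟨a, ha, rfl⟩
        omega
    rw [ht, Finset.sum_congr rfl hmem, hmap, Finset.sum_map]
    simp only [Function.Embedding.coeFn_mk]
    rw [hf]
    rw [← Finset.sum_mul]
    rw [show (-s - (k : ℂ) - 1) = -(s + ((k + 1 : ℕ) : ℂ)) by push_cast; ring,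
      Complex.cpow_neg, div_eq_mul_inv]
    congr 1
  have hJ : ∀ n : ℕ, ∫ x in Ioi ((n + 1 : ℕ) : ℝ), f n x =
      (Nat.factorial k : ℂ) / (ascPochhammer ℂ (k + 1)).eval s * ((n : ℂ) + 1) ^ (-s) := by
    intro n
    have h := myKey hs k (hcpos n)
    rw [eq_comm, div_mul_eq_mul_div, div_eq_iff hne, mul_comm _ ((ascPochhammer ℂ (k + 1)).eval s)]
    rw [h]
    congr 2
    push_cast
    ring
  have hzeta : ∑' n : ℕ, ((n : ℂ) + 1) ^ (-s) = riemannZeta s := by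
    rw [zeta_eq_tsum_one_div_nat_add_one_cpow hs]
    apply tsum_congr
    intro n
    rw [Complex.cpow_neg, one_div]
  have hint : ∫ x in Ioi (1 : ℝ),
      (∑ n ∈ Finset.Icc 1 ⌊x⌋, ((x : ℂ) - (n : ℂ)) ^ k) / (x : ℂ) ^ (s + ((k + 1 : ℕ) : ℂ)) =
      (Nat.factorial k : ℂ) / (ascPochhammer ℂ (k + 1)).eval s * riemannZeta s := by
    rw [setIntegral_congr_fun measurableSet_Ioi hpt, ← hkey]
    calc ∑' n : ℕ, ∫ x in Ioi (1 : ℝ), F n x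
        = ∑' n : ℕ, (Nat.factorial k : ℂ) / (ascPochhammer ℂ (k + 1)).eval s *
            ((n : ℂ) + 1) ^ (-s) := tsum_congr fun n => by rw [hsetEq n, hJ n]
      _ = (Nat.factorial k : ℂ) / (ascPochhammer ℂ (k + 1)).eval s *
            ∑' n : ℕ, ((n : ℂ) + 1) ^ (-s) := tsum_mul_left
      _ = (Nat.factorial k : ℂ) / (ascPochhammer ℂ (k + 1)).eval s * riemannZeta s := by
            rw [hzeta]
  rw [hint]
  have hfk : (Nat.factorial k : ℂ) ≠ 0 := Nat.cast_ne_zero.mpr k.factorial_ne_zero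
  field_simp
end

section
/- For every complex number s with Re s > 0 and s ≠ 1, ∑_{k=0}^{∞} ( (s)_k / (k+1)! ) · (ζ(s+k) − 1) = 1/(s−1), where (s)_k is the ascending Pochhammer symbol. -/
open Complex Filter Topology Metric

noncomputable def Kc : ℝ := 4 * ∑' n : ℕ, ((n : ℝ) + 2) ^ (-2 : ℝ)

noncomputable def pzTerm (k : ℕ) (s : ℂ) : ℂ :=
  (ascPochhammer ℂ k).eval s / ((k + 1).factorial : ℂ) * (riemannZeta (s + k) - 1)

lemma asc_eval_succ (R : Type*) [CommSemiring R] (k : ℕ) (s : R) :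
    (ascPochhammer R (k+1)).eval s = (ascPochhammer R k).eval s * (s + k) := by
  rw [ascPochhammer_succ_right]
  simp [Polynomial.eval_mul]

lemma asc_nonneg (k : ℕ) {x : ℝ} (hx : 0 ≤ x) : 0 ≤ (ascPochhammer ℝ k).eval x := by
  induction k with
  | zero => simp
  | succ k ih => rw [asc_eval_succ]; positivity

lemma asc_pos (k : ℕ) {x : ℝ} (hx : 0 < x) : 0 < (ascPochhammer ℝ k).eval x := by
  induction k with
  | zero => simp
  | succ k ih => rw [asc_eval_succ]; positivity

lemma asc_mono (k : ℕ) {x y : ℝ} (hx : 0 ≤ x) (hxy : x ≤ y) :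
    (ascPochhammer ℝ k).eval x ≤ (ascPochhammer ℝ k).eval y := by
  induction k with
  | zero => simp
  | succ k ih =>
    rw [asc_eval_succ, asc_eval_succ]
    have h1 := asc_nonneg k hx
    have := asc_nonneg k (hx.trans hxy)
    apply mul_le_mul ih (by linarith) (by positivity) this

lemma asc_norm_le (k : ℕ) (s : ℂ) :
    ‖(ascPochhammer ℂ k).eval s‖ ≤ (ascPochhammer ℝ k).eval ‖s‖ := by
  induction k with
  | zero => simp
  | succ k ih =>
    rw [asc_eval_succ, asc_eval_succ, norm_mul]
    have h1 : ‖s + (k:ℂ)‖ ≤ ‖s‖ + k := by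
      calc ‖s + (k:ℂ)‖ ≤ ‖s‖ + ‖(k:ℂ)‖ := norm_add_le _ _
      _ = ‖s‖ + k := by simp
    exact mul_le_mul ih h1 (norm_nonneg _) (asc_nonneg k (norm_nonneg s))

lemma summable_asc (R : ℝ) (hR : 0 < R) :
    Summable (fun k : ℕ => (ascPochhammer ℝ k).eval R / (k+1).factorial * (2:ℝ)⁻¹ ^ k) := by
  apply summable_of_ratio_test_tendsto_lt_one (l := 1/2) (by norm_num)
  · filter_upwards with k
    have h1 := asc_pos k hR
    have h2 : (0:ℝ) < (k+1).factorial := by positivity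
    positivity
  · have key : ∀ k : ℕ, ‖(ascPochhammer ℝ (k+1)).eval R / (k+1+1).factorial * (2:ℝ)⁻¹ ^ (k+1)‖ /
        ‖(ascPochhammer ℝ k).eval R / (k+1).factorial * (2:ℝ)⁻¹ ^ k‖
        = (R + k) / (k + 2) * (1/2) := by
      intro k
      have h1 := asc_pos k hR
      have h1' := asc_pos (k+1) hR
      have h2 : (0:ℝ) < (k+1).factorial := by positivity
      rw [Real.norm_eq_abs, Real.norm_eq_abs, abs_of_pos (by positivity), abs_of_pos (by positivity),
        asc_eval_succ]
      rw [Nat.factorial_succ (k+1)]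
      push_cast
      field_simp
      ring
    simp only [key]
    have h3 : Tendsto (fun k : ℕ => (R + k) / (k + 2)) atTop (𝓝 1) := by
      have : (fun k : ℕ => (R + k) / (k + 2)) = fun k : ℕ => 1 + (R - 2) / ((k:ℝ) + 2) := by
        funext k
        have : ((k:ℝ) + 2) ≠ 0 := by positivity
        field_simp
        ring
      rw [this]
      have h4 : Tendsto (fun k : ℕ => (R - 2) / ((k:ℝ) + 2)) atTop (𝓝 0) := by
        apply Tendsto.div_atTop tendsto_const_nhds
        exact tendsto_atTop_add_const_right _ 2 tendsto_natCast_atTop_atTop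
      simpa using tendsto_const_nhds.add h4
    have := h3.mul_const (1/2 : ℝ)
    simpa using this

lemma hasSum_zeta_sub_one {w : ℂ} (hw : 1 < w.re) :
    HasSum (fun n : ℕ => ((n:ℂ) + 2) ^ (-w)) (riemannZeta w - 1) := by
  have hsum : Summable (fun n : ℕ => 1 / ((n:ℂ) + 1) ^ w) := by
    have h0 := (Complex.summable_one_div_nat_cpow (p := w)).mpr hw
    have := (summable_nat_add_iff (f := fun n : ℕ => 1 / (n:ℂ) ^ w) 1).mpr h0
    simpa using this
  have h1 : HasSum (fun n : ℕ => 1 / ((n:ℂ) + 1) ^ w) (riemannZeta w) := by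
    have := hsum.hasSum
    rwa [← zeta_eq_tsum_one_div_nat_add_one_cpow hw] at this
  have h2 := (hasSum_nat_add_iff' (f := fun n : ℕ => 1 / ((n:ℂ) + 1) ^ w) 1).mpr h1
  simp only [Finset.range_one, Finset.sum_singleton, Nat.cast_zero, zero_add, one_cpow] at h2
  rw [div_one] at h2
  convert h2 using 2 with n
  · rfl
  rw [cpow_neg, one_div]
  push_cast
  ring_nf

lemma summable_rpow_shift {σ : ℝ} (hσ : 1 < σ) : Summable (fun n : ℕ => ((n:ℝ)+2) ^ (-σ)) := by
  have h0 : Summable (fun n : ℕ => (n:ℝ) ^ (-σ)) := by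
    rw [Real.summable_nat_rpow]; linarith
  have := (summable_nat_add_iff (f := fun n : ℕ => (n:ℝ) ^ (-σ)) 2).mpr h0
  have hcast : ∀ n : ℕ, ((n + 2 : ℕ) : ℝ) = (n:ℝ) + 2 := by intro n; push_cast; ring
  simpa [hcast] using this

lemma tail_tsum_le {σ : ℝ} (hσ : 2 ≤ σ) :
    ∑' n : ℕ, ((n:ℝ)+2) ^ (-σ) ≤ Kc * 2 ^ (-σ) := by
  have hb : ∀ n : ℕ, ((n:ℝ)+2) ^ (-σ) ≤ ((n:ℝ)+2) ^ (-2:ℝ) * 2 ^ (2-σ) := by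
    intro n
    have hpos : (0:ℝ) < (n:ℝ) + 2 := by positivity
    have : ((n:ℝ)+2) ^ (-σ) = ((n:ℝ)+2) ^ (-2:ℝ) * ((n:ℝ)+2) ^ (2-σ) := by
      rw [← Real.rpow_add hpos]; ring_nf
    rw [this]
    apply mul_le_mul_of_nonneg_left _ (Real.rpow_nonneg (by positivity) _)
    exact Real.rpow_le_rpow_of_nonpos (by norm_num) (by linarith [Nat.cast_nonneg (α := ℝ) n]) (by linarith)
  have hs1 : Summable (fun n : ℕ => ((n:ℝ)+2) ^ (-σ)) := summable_rpow_shift (by linarith)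
  have hs2 : Summable (fun n : ℕ => ((n:ℝ)+2) ^ (-2:ℝ)) := by
    have := summable_rpow_shift (σ := 2) one_lt_two
    simpa using this
  calc ∑' n : ℕ, ((n:ℝ)+2) ^ (-σ) ≤ ∑' n : ℕ, ((n:ℝ)+2) ^ (-2:ℝ) * 2 ^ (2-σ) :=
        Summable.tsum_le_tsum hb hs1 (hs2.mul_right _)
    _ = (∑' n : ℕ, ((n:ℝ)+2) ^ (-2:ℝ)) * 2 ^ (2-σ) := tsum_mul_right
    _ = Kc * 2 ^ (-σ) := by
        rw [Kc, show (2:ℝ) - σ = 2 + -σ by ring, Real.rpow_add two_pos]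
        norm_num
        ring

lemma norm_cpow_nat (n : ℕ) (w : ℂ) : ‖((n:ℂ) + 2) ^ (-w)‖ = ((n:ℝ) + 2) ^ (-w.re) := by
  have h : ((n:ℂ) + 2) = (((n:ℝ) + 2 : ℝ) : ℂ) := by push_cast; ring
  rw [h, Complex.norm_cpow_eq_rpow_re_of_pos (by positivity), Complex.neg_re]

lemma summable_norm_cpow {w : ℂ} (hw : 1 < w.re) :
    Summable (fun n : ℕ => ‖((n:ℂ) + 2) ^ (-w)‖) := by
  simp only [norm_cpow_nat]
  exact summable_rpow_shift hw

lemma zeta_bound {w : ℂ} (hw : 2 ≤ w.re) : ‖riemannZeta w - 1‖ ≤ Kc * 2 ^ (-w.re) := by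
  have h := (hasSum_zeta_sub_one (by linarith : 1 < w.re)).tsum_eq
  rw [← h]
  calc ‖∑' n : ℕ, ((n:ℂ) + 2) ^ (-w)‖ ≤ ∑' n : ℕ, ‖((n:ℂ) + 2) ^ (-w)‖ :=
       norm_tsum_le_tsum_norm (summable_norm_cpow (by linarith))
    _ = ∑' n : ℕ, ((n:ℝ) + 2) ^ (-w.re) := by simp only [norm_cpow_nat]
    _ ≤ Kc * 2 ^ (-w.re) := tail_tsum_le hw

lemma Kc_nonneg : 0 ≤ Kc := by
  have : 0 ≤ ∑' n : ℕ, ((n : ℝ) + 2) ^ (-2 : ℝ) :=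
    tsum_nonneg fun n => Real.rpow_nonneg (by positivity) _
  rw [Kc]; linarith

lemma term_bound {s : ℂ} {k : ℕ} (h2 : 2 ≤ s.re + k) (h0 : 0 ≤ s.re) {R : ℝ} (hsR : ‖s‖ ≤ R) :
    ‖pzTerm k s‖ ≤ (ascPochhammer ℝ k).eval R / (k+1).factorial * (2:ℝ)⁻¹ ^ k * Kc := by
  have hre : (s + (k:ℂ)).re = s.re + k := by simp
  have hz : ‖riemannZeta (s + k) - 1‖ ≤ Kc * 2 ^ (-(s.re + k)) := by
    have := zeta_bound (w := s + k) (by rw [hre]; exact h2)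
    rwa [hre] at this
  have hp : ‖(ascPochhammer ℂ k).eval s / ((k + 1).factorial : ℂ)‖ ≤
      (ascPochhammer ℝ k).eval R / (k+1).factorial := by
    have h0R : (0:ℝ) ≤ R := (norm_nonneg s).trans hsR
    rw [norm_div]
    have hden : ‖(((k + 1).factorial : ℕ) : ℂ)‖ = (((k+1).factorial : ℕ) : ℝ) := by
      simp [Complex.norm_natCast]
    rw [hden]
    gcongr
    · exact (asc_norm_le k s).trans (asc_mono k (norm_nonneg s) hsR)
  have h2k : (2:ℝ) ^ (-(s.re + k)) ≤ (2:ℝ)⁻¹ ^ k := by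
    have : (2:ℝ) ^ (-(s.re + k)) ≤ (2:ℝ) ^ (-(k:ℝ)) := by
      apply Real.rpow_le_rpow_of_exponent_le one_le_two (by linarith)
    calc (2:ℝ) ^ (-(s.re + k)) ≤ (2:ℝ) ^ (-(k:ℝ)) := this
      _ = (2:ℝ)⁻¹ ^ k := by
          rw [Real.rpow_neg (by norm_num), Real.rpow_natCast, inv_pow]
  calc ‖pzTerm k s‖ = ‖(ascPochhammer ℂ k).eval s / ((k + 1).factorial : ℂ)‖ *
        ‖riemannZeta (s + k) - 1‖ := norm_mul _ _
    _ ≤ ((ascPochhammer ℝ k).eval R / (k+1).factorial) * (Kc * 2 ^ (-(s.re + k))) := by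
        apply mul_le_mul hp hz (norm_nonneg _)
        have := asc_nonneg k (le_trans (norm_nonneg s) hsR)
        positivity
    _ ≤ (ascPochhammer ℝ k).eval R / (k+1).factorial * (2:ℝ)⁻¹ ^ k * Kc := by
        have hKc := Kc_nonneg
        have ha := asc_nonneg k (le_trans (norm_nonneg s) hsR)
        have h2kn : (0:ℝ) ≤ (2:ℝ) ^ (-(s.re + k)) := Real.rpow_nonneg (by norm_num) _
        have hfac : (0:ℝ) ≤ (ascPochhammer ℝ k).eval R / (k+1).factorial := by positivity
        calc ((ascPochhammer ℝ k).eval R / (k+1).factorial) * (Kc * 2 ^ (-(s.re + k)))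
            = ((ascPochhammer ℝ k).eval R / (k+1).factorial) * 2 ^ (-(s.re + k)) * Kc := by ring
          _ ≤ (ascPochhammer ℝ k).eval R / (k+1).factorial * (2:ℝ)⁻¹ ^ k * Kc := by
              apply mul_le_mul_of_nonneg_right _ hKc
              exact mul_le_mul_of_nonneg_left h2k hfac

lemma onesub_slit {z : ℂ} (hz : z ∈ ball (0:ℂ) 1) : (1 - z) ∈ Complex.slitPlane := by
  rw [Complex.mem_slitPlane_iff]
  left
  rw [mem_ball, dist_zero_right] at hz
  have := Complex.abs_re_le_norm z
  simp only [Complex.sub_re, Complex.one_re]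
  have : z.re ≤ ‖z‖ := (le_abs_self _).trans (by simpa using Complex.abs_re_le_norm z)
  linarith

lemma hasDerivAt_onesub_cpow {z : ℂ} (hz : z ∈ ball (0:ℂ) 1) (e : ℂ) :
    HasDerivAt (fun z : ℂ => (1 - z) ^ e) (-e * (1 - z) ^ (e - 1)) z := by
  have h1 : HasDerivAt (fun z : ℂ => 1 - z) (-1) z := by
    simpa using (hasDerivAt_id' z).const_sub (1:ℂ)
  have := h1.cpow_const (c := e) (onesub_slit hz)
  convert this using 1
  ring

lemma iteratedDeriv_onesub_cpow (w : ℂ) (n : ℕ) :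
    ∀ z ∈ ball (0:ℂ) 1,
      iteratedDeriv n (fun z : ℂ => (1 - z) ^ (-w)) z
        = (ascPochhammer ℂ n).eval w * (1 - z) ^ (-w - n) := by
  induction n with
  | zero => intro z hz; simp
  | succ n ih =>
    intro z hz
    rw [iteratedDeriv_succ]
    have hEq : Set.EqOn (iteratedDeriv n (fun z : ℂ => (1 - z) ^ (-w)))
        (fun z => (ascPochhammer ℂ n).eval w * (1 - z) ^ (-w - n)) (ball (0:ℂ) 1) := ih
    have hev : iteratedDeriv n (fun z : ℂ => (1 - z) ^ (-w))
        =ᶠ[𝓝 z] (fun z => (ascPochhammer ℂ n).eval w * (1 - z) ^ (-w - n)) :=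
      Filter.eventuallyEq_of_mem (isOpen_ball.mem_nhds hz) hEq
    rw [hev.deriv_eq]
    have hd := (hasDerivAt_onesub_cpow hz (-w - n)).const_mul ((ascPochhammer ℂ n).eval w)
    rw [hd.deriv]
    rw [ascPochhammer_succ_right]
    simp only [Polynomial.eval_mul, Polynomial.eval_add, Polynomial.eval_X, Polynomial.eval_natCast]
    have : -w - (n:ℂ) - 1 = -w - (n + 1 : ℕ) := by push_cast; ring
    rw [this]
    ring

lemma binomial_hasSum (w : ℂ) {x : ℝ} (h1 : |x| < 1) :
    HasSum (fun k : ℕ => (ascPochhammer ℂ k).eval w * (x:ℂ) ^ k / (k.factorial : ℂ))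
      ((1 - (x:ℂ)) ^ (-w)) := by
  have hdiff : DifferentiableOn ℂ (fun z : ℂ => (1 - z) ^ (-w)) (ball (0:ℂ) 1) :=
    fun z hz => (hasDerivAt_onesub_cpow hz (-w)).differentiableAt.differentiableWithinAt
  have hx : (x:ℂ) ∈ ball (0:ℂ) 1 := by
    rw [mem_ball, dist_zero_right]
    simpa [Complex.norm_real] using h1
  have H := Complex.hasSum_taylorSeries_on_ball hdiff hx
  convert H using 2 with k
  · rfl
  rw [iteratedDeriv_onesub_cpow w k 0 (mem_ball_self one_pos)]
  simp only [sub_zero, smul_eq_mul, Complex.one_cpow]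
  field_simp

lemma asc_shift (s : ℂ) (k : ℕ) :
    (ascPochhammer ℂ (k+1)).eval (s - 1) = (s - 1) * (ascPochhammer ℂ k).eval s := by
  induction k with
  | zero => simp
  | succ k ih =>
    rw [asc_eval_succ, ih, asc_eval_succ]
    push_cast
    ring

lemma hasSum_inner (s : ℂ) (hs1 : s ≠ 1) (n : ℕ) :
    HasSum (fun k : ℕ => (ascPochhammer ℂ k).eval s / ((k + 1).factorial : ℂ) *
        ((n:ℂ) + 2) ^ (-(s + k)))
      ((((n:ℂ) + 1) ^ (1 - s) - ((n:ℂ) + 2) ^ (1 - s)) / (s - 1)) := by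
  set x : ℝ := ((n:ℝ) + 2)⁻¹ with hxdef
  have hx0 : (0:ℝ) < x := by positivity
  have hx1 : |x| < 1 := by
    rw [abs_of_pos hx0, hxdef, inv_lt_one_iff₀]
    right
    have : (0:ℝ) ≤ (n:ℝ) := Nat.cast_nonneg n
    linarith
  have hN0 : ((n:ℂ) + 2) ≠ 0 := by
    intro h
    have := congrArg Complex.re h
    simp at this
    have : (0:ℝ) ≤ (n:ℝ) := Nat.cast_nonneg n
    linarith
  have hxC : (x:ℂ) = ((n:ℂ) + 2)⁻¹ := by rw [hxdef]; push_cast; ring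
  have hs1' : s - 1 ≠ 0 := sub_ne_zero.mpr hs1
  have H0 := binomial_hasSum (s - 1) hx1
  have H1 := (hasSum_nat_add_iff'
    (f := fun k : ℕ => (ascPochhammer ℂ k).eval (s-1) * (x:ℂ) ^ k / (k.factorial : ℂ)) 1).mpr H0
  simp only [Finset.range_one, Finset.sum_singleton] at H1
  norm_num at H1
  have H2 := H1.mul_left (((n:ℂ) + 2) ^ (1 - s) / (s - 1))
  have hterm : ∀ k : ℕ, ((n:ℂ) + 2) ^ (1 - s) / (s - 1) *
      ((ascPochhammer ℂ (k+1)).eval (s-1) * (x:ℂ) ^ (k+1) / ((k+1).factorial : ℂ))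
      = (ascPochhammer ℂ k).eval s / ((k + 1).factorial : ℂ) * ((n:ℂ) + 2) ^ (-(s + k)) := by
    intro k
    have hpow : ((n:ℂ)+2) ^ (-(s+(k:ℂ))) = ((n:ℂ)+2) ^ (1-s) * (((n:ℂ)+2) ^ (k+1))⁻¹ := by
      rw [← Complex.cpow_natCast ((n:ℂ)+2) (k+1), ← Complex.cpow_neg,
        ← Complex.cpow_add _ _ hN0]
      congr 1
      push_cast
      ring
    rw [asc_shift, hxC, hpow, inv_pow]
    have hf : ((k+1).factorial : ℂ) ≠ 0 := Nat.cast_ne_zero.mpr (Nat.factorial_ne_zero _)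
    have hp : (((n:ℂ)+2) ^ (k+1)) ≠ 0 := pow_ne_zero _ hN0
    field_simp
  have hval : ((n:ℂ) + 2) ^ (1 - s) / (s - 1) * ((1 - (x:ℂ)) ^ (1 - s) - 1)
      = ((((n:ℂ) + 1) ^ (1 - s) - ((n:ℂ) + 2) ^ (1 - s)) / (s - 1)) := by
    have h1x : (1 - (x:ℂ)) = ((((n:ℝ)+1) : ℝ) : ℂ) * (((((n:ℝ)+2))⁻¹ : ℝ) : ℂ) := by
      rw [hxdef]
      push_cast
      have : ((n:ℂ)+2) ≠ 0 := hN0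
      field_simp
      ring
    have harg : ((n:ℂ)+2).arg ≠ Real.pi := by
      have : ((n:ℂ)+2) = (((n:ℝ)+2 : ℝ) : ℂ) := by push_cast; ring
      rw [this, Complex.arg_ofReal_of_nonneg (by positivity)]
      exact Real.pi_ne_zero.symm
    have hsplit : (1 - (x:ℂ)) ^ (1 - s)
        = ((n:ℂ)+1) ^ (1-s) * (((n:ℂ)+2) ^ (1-s))⁻¹ := by
      rw [h1x, Complex.mul_cpow_ofReal_nonneg (by positivity) (by positivity)]
      have e1 : ((((n:ℝ)+1) : ℝ) : ℂ) = (n:ℂ)+1 := by push_cast; ring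
      have e2 : (((((n:ℝ)+2))⁻¹ : ℝ) : ℂ) = ((n:ℂ)+2)⁻¹ := by push_cast; ring
      rw [e1, e2, Complex.inv_cpow _ _ harg]
    rw [hsplit]
    have hcne : ((n:ℂ)+2) ^ (1-s) ≠ 0 := by
      rw [Ne, Complex.cpow_eq_zero_iff]
      tauto
    field_simp
  rw [← hval]
  convert H2 using 1
  · rfl
  exact funext fun k => (hterm k).symm

lemma norm_cpow_nat' (n : ℕ) (c : ℝ) (hc : 0 < c) (w : ℂ) :
    ‖((n:ℂ) + c) ^ w‖ = ((n:ℝ) + c) ^ w.re := by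
  have h : ((n:ℂ) + (c:ℂ)) = (((n:ℝ) + c : ℝ) : ℂ) := by push_cast; ring
  rw [h, Complex.norm_cpow_eq_rpow_re_of_pos (by positivity)]

lemma hasSum_tele {s : ℂ} (hs : 2 < s.re) :
    HasSum (fun n : ℕ => ((n:ℂ) + 1) ^ (1 - s) - ((n:ℂ) + 2) ^ (1 - s)) 1 := by
  have hre : (1 - s).re = 1 - s.re := by simp
  have hsummand : ∀ n : ℕ, ‖((n:ℂ) + 1) ^ (1 - s) - ((n:ℂ) + 2) ^ (1 - s)‖ ≤
      ((n:ℝ) + 1) ^ (1 - s.re) + ((n:ℝ) + 2) ^ (1 - s.re) := by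
    intro n
    calc ‖((n:ℂ) + 1) ^ (1 - s) - ((n:ℂ) + 2) ^ (1 - s)‖
        ≤ ‖((n:ℂ) + 1) ^ (1 - s)‖ + ‖((n:ℂ) + 2) ^ (1 - s)‖ := norm_sub_le _ _
      _ = ((n:ℝ) + 1) ^ (1 - s.re) + ((n:ℝ) + 2) ^ (1 - s.re) := by
          rw [show ((n:ℂ)+1) = ((n:ℂ) + (1:ℝ)) by norm_num,
            show ((n:ℂ)+2) = ((n:ℂ) + (2:ℝ)) by norm_num,
            norm_cpow_nat' n 1 one_pos, norm_cpow_nat' n 2 two_pos, hre]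
  have hmsum : Summable (fun n : ℕ => ((n:ℝ) + 1) ^ (1 - s.re) + ((n:ℝ) + 2) ^ (1 - s.re)) := by
    have h0 : Summable (fun n : ℕ => (n:ℝ) ^ (1 - s.re)) := by
      rw [Real.summable_nat_rpow]; linarith
    have h1 := (summable_nat_add_iff (f := fun n : ℕ => (n:ℝ) ^ (1 - s.re)) 1).mpr h0
    have h2 := (summable_nat_add_iff (f := fun n : ℕ => (n:ℝ) ^ (1 - s.re)) 2).mpr h0
    have hc1 : ∀ n : ℕ, ((n + 1 : ℕ) : ℝ) = (n:ℝ) + 1 := by intro n; push_cast; ring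
    have hc2 : ∀ n : ℕ, ((n + 2 : ℕ) : ℝ) = (n:ℝ) + 2 := by intro n; push_cast; ring
    simp only [hc1] at h1
    simp only [hc2] at h2
    exact h1.add h2
  have hsummable : Summable (fun n : ℕ => ((n:ℂ) + 1) ^ (1 - s) - ((n:ℂ) + 2) ^ (1 - s)) :=
    Summable.of_norm_bounded hmsum hsummand
  -- partial sums telescope
  have htel : ∀ N : ℕ, ∑ n ∈ Finset.range N, (((n:ℂ) + 1) ^ (1 - s) - ((n:ℂ) + 2) ^ (1 - s))
      = 1 - ((N:ℂ) + 1) ^ (1 - s) := by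
    intro N
    have := Finset.sum_range_sub' (f := fun n : ℕ => ((n:ℂ) + 1) ^ (1 - s)) N
    simp only [Nat.cast_add, Nat.cast_one] at this
    calc ∑ n ∈ Finset.range N, (((n:ℂ) + 1) ^ (1 - s) - ((n:ℂ) + 2) ^ (1 - s))
        = ∑ n ∈ Finset.range N, ((((n:ℕ):ℂ) + 1) ^ (1 - s) - ((((n+1:ℕ)):ℂ) + 1) ^ (1 - s)) := by
          apply Finset.sum_congr rfl
          intro n _
          congr 2
          push_cast
          ring
      _ = (((0:ℕ):ℂ) + 1) ^ (1 - s) - ((N:ℂ) + 1) ^ (1 - s) := by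
          rw [Finset.sum_range_sub' (f := fun n : ℕ => (((n:ℕ):ℂ) + 1) ^ (1 - s)) N]
      _ = 1 - ((N:ℂ) + 1) ^ (1 - s) := by norm_num
  -- limit of partial sums is 1
  have hlim : Tendsto (fun N : ℕ => 1 - ((N:ℂ) + 1) ^ (1 - s)) atTop (𝓝 1) := by
    have hnorm : Tendsto (fun N : ℕ => ‖((N:ℂ) + 1) ^ (1 - s)‖) atTop (𝓝 0) := by
      have heq : ∀ N : ℕ, ‖((N:ℂ) + 1) ^ (1 - s)‖ = ((N:ℝ) + 1) ^ (1 - s.re) := by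
        intro N
        rw [show ((N:ℂ)+1) = ((N:ℂ) + (1:ℝ)) by norm_num, norm_cpow_nat' N 1 one_pos, hre]
      simp only [heq]
      have h1 : Tendsto (fun N : ℕ => (N:ℝ) + 1) atTop atTop :=
        tendsto_atTop_add_const_right _ 1 tendsto_natCast_atTop_atTop
      have h2 : Tendsto (fun x : ℝ => x ^ (-(s.re - 1))) atTop (𝓝 0) :=
        tendsto_rpow_neg_atTop (by linarith)
      have := h2.comp h1
      simpa [neg_sub, Function.comp_def] using this
    have : Tendsto (fun N : ℕ => ((N:ℂ) + 1) ^ (1 - s)) atTop (𝓝 0) :=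
      tendsto_zero_iff_norm_tendsto_zero.mpr hnorm
    have h3 := (tendsto_const_nhds (x := (1:ℂ)) (f := atTop (α := ℕ))).sub this
    simpa using h3
  have hAll := hsummable.hasSum
  have h1 := hAll.tendsto_sum_nat
  simp only [htel] at h1
  have : (∑' n : ℕ, (((n:ℂ) + 1) ^ (1 - s) - ((n:ℂ) + 2) ^ (1 - s))) = 1 :=
    tendsto_nhds_unique h1 hlim
  rwa [this] at hAll

lemma key {s : ℂ} (hs : 2 < s.re) :
    (∑' k : ℕ, (ascPochhammer ℂ k).eval s / ((k + 1).factorial : ℂ) *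
        (riemannZeta (s + k) - 1)) = 1 / (s - 1) := by
  have hs1 : s ≠ 1 := by
    intro h; rw [h] at hs; simp at hs
  set f : ℕ → ℕ → ℂ := fun k n =>
    (ascPochhammer ℂ k).eval s / ((k + 1).factorial : ℂ) * ((n:ℂ) + 2) ^ (-(s + k)) with hf
  have hkre : ∀ k : ℕ, (s + (k:ℂ)).re = s.re + k := by intro k; simp
  have hrow : ∀ k : ℕ, HasSum (f k)
      ((ascPochhammer ℂ k).eval s / ((k + 1).factorial : ℂ) * (riemannZeta (s + k) - 1)) := by
    intro k
    have hre : 1 < (s + (k:ℂ)).re := by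
      rw [hkre]
      have : (0:ℝ) ≤ (k:ℝ) := Nat.cast_nonneg k
      linarith
    exact (hasSum_zeta_sub_one hre).mul_left _
  -- summability of norms over the product
  have hnorm_eq : ∀ k n : ℕ, ‖f k n‖ =
      ‖(ascPochhammer ℂ k).eval s / ((k + 1).factorial : ℂ)‖ * ((n:ℝ) + 2) ^ (-(s.re + k)) := by
    intro k n
    rw [hf]
    simp only
    rw [norm_mul, norm_cpow_nat n (s + k), hkre]
  set R : ℝ := ‖s‖ + 1 with hR
  have hR0 : 0 < R := by positivity
  have hcb : ∀ k : ℕ, ‖(ascPochhammer ℂ k).eval s / ((k + 1).factorial : ℂ)‖ ≤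
      (ascPochhammer ℝ k).eval R / (k+1).factorial := by
    intro k
    rw [norm_div]
    have hden : ‖(((k + 1).factorial : ℕ) : ℂ)‖ = (((k+1).factorial : ℕ) : ℝ) := by
      simp [Complex.norm_natCast]
    rw [hden]
    gcongr
    · exact (asc_norm_le k s).trans (asc_mono k (norm_nonneg s) (by rw [hR]; linarith))
  have hcol_sum : ∀ k : ℕ, Summable (fun n : ℕ => ‖f k n‖) := by
    intro k
    simp only [hnorm_eq]
    apply Summable.mul_left
    apply summable_rpow_shift
    have : (0:ℝ) ≤ (k:ℝ) := Nat.cast_nonneg k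
    linarith
  have htsum_col_le : ∀ k : ℕ, ∑' n : ℕ, ‖f k n‖ ≤
      (ascPochhammer ℝ k).eval R / (k+1).factorial * (2:ℝ)⁻¹ ^ k * Kc := by
    intro k
    have hknn : (0:ℝ) ≤ (k:ℝ) := Nat.cast_nonneg k
    have h2σ : 2 ≤ s.re + k := by linarith
    calc ∑' n : ℕ, ‖f k n‖
        = ‖(ascPochhammer ℂ k).eval s / ((k + 1).factorial : ℂ)‖ *
            ∑' n : ℕ, ((n:ℝ) + 2) ^ (-(s.re + k)) := by
          simp only [hnorm_eq]; exact tsum_mul_left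
      _ ≤ ((ascPochhammer ℝ k).eval R / (k+1).factorial) * (Kc * 2 ^ (-(s.re + k))) := by
          apply mul_le_mul (hcb k) (tail_tsum_le h2σ)
            (tsum_nonneg fun n => Real.rpow_nonneg (by positivity) _)
            (div_nonneg (asc_nonneg k hR0.le) (by positivity))
      _ ≤ (ascPochhammer ℝ k).eval R / (k+1).factorial * (2:ℝ)⁻¹ ^ k * Kc := by
          have h2k : (2:ℝ) ^ (-(s.re + k)) ≤ (2:ℝ)⁻¹ ^ k := by
            calc (2:ℝ) ^ (-(s.re + k)) ≤ (2:ℝ) ^ (-(k:ℝ)) :=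
                Real.rpow_le_rpow_of_exponent_le one_le_two (by linarith)
              _ = (2:ℝ)⁻¹ ^ k := by
                  rw [Real.rpow_neg (by norm_num), Real.rpow_natCast, inv_pow]
          have ha := asc_nonneg k hR0.le
          have hKc := Kc_nonneg
          have hfac : (0:ℝ) ≤ (ascPochhammer ℝ k).eval R / (k+1).factorial :=
            div_nonneg ha (by positivity)
          calc ((ascPochhammer ℝ k).eval R / (k+1).factorial) * (Kc * 2 ^ (-(s.re + k)))
              = ((ascPochhammer ℝ k).eval R / (k+1).factorial) * 2 ^ (-(s.re + k)) * Kc := by ring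
            _ ≤ _ := mul_le_mul_of_nonneg_right (mul_le_mul_of_nonneg_left h2k hfac) hKc
  have hnormsum : Summable (fun p : ℕ × ℕ => ‖Function.uncurry f p‖) := by
    rw [summable_prod_of_nonneg (fun p => norm_nonneg _)]
    constructor
    · exact fun k => hcol_sum k
    · apply Summable.of_nonneg_of_le (fun k => tsum_nonneg fun n => norm_nonneg _) htsum_col_le
      exact ((summable_asc R hR0).mul_right Kc)
  have hsummable : Summable (Function.uncurry f) := Summable.of_norm hnormsum
  calc (∑' k : ℕ, (ascPochhammer ℂ k).eval s / ((k + 1).factorial : ℂ) *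
        (riemannZeta (s + k) - 1))
      = ∑' k : ℕ, ∑' n : ℕ, f k n := tsum_congr fun k => ((hrow k).tsum_eq).symm
    _ = ∑' n : ℕ, ∑' k : ℕ, f k n := (hsummable.tsum_comm).symm
    _ = ∑' n : ℕ, (((n:ℂ) + 1) ^ (1 - s) - ((n:ℂ) + 2) ^ (1 - s)) / (s - 1) :=
        tsum_congr fun n => (hasSum_inner s hs1 n).tsum_eq
    _ = 1 / (s - 1) := ((hasSum_tele hs).div_const (s-1)).tsum_eq

lemma preconnected_U : IsPreconnected {z : ℂ | 0 < z.re ∧ z ≠ 1} := by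
  have hHp : IsPreconnected {z : ℂ | 0 < z.re ∧ 0 < z.im} :=
    ((convex_halfSpace_re_gt 0).inter (convex_halfSpace_im_gt 0)).isPreconnected
  have hHm : IsPreconnected {z : ℂ | 0 < z.re ∧ z.im < 0} :=
    ((convex_halfSpace_re_gt 0).inter (convex_halfSpace_im_lt 0)).isPreconnected
  have hL1 : IsPreconnected {z : ℂ | 0 < z.re ∧ z.re < 1} :=
    ((convex_halfSpace_re_gt 0).inter (convex_halfSpace_re_lt 1)).isPreconnected
  have hL2 : IsPreconnected {z : ℂ | 1 < z.re} :=
    (convex_halfSpace_re_gt 1).isPreconnected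
  have h1 : IsPreconnected ({z : ℂ | 0 < z.re ∧ 0 < z.im} ∪ {z : ℂ | 0 < z.re ∧ z.re < 1}) := by
    apply IsPreconnected.union (⟨1/2, 1/2⟩ : ℂ) _ _ hHp hL1
    · constructor <;> norm_num
    · constructor <;> norm_num
  have h2 : IsPreconnected (({z : ℂ | 0 < z.re ∧ 0 < z.im} ∪ {z : ℂ | 0 < z.re ∧ z.re < 1})
      ∪ {z : ℂ | 1 < z.re}) := by
    apply IsPreconnected.union (⟨2, 1⟩ : ℂ) _ _ h1 hL2
    · left; constructor <;> norm_num
    · norm_num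
  have h3 : IsPreconnected ((({z : ℂ | 0 < z.re ∧ 0 < z.im} ∪ {z : ℂ | 0 < z.re ∧ z.re < 1})
      ∪ {z : ℂ | 1 < z.re}) ∪ {z : ℂ | 0 < z.re ∧ z.im < 0}) := by
    apply IsPreconnected.union (⟨1/2, -1/2⟩ : ℂ) _ _ h2 hHm
    · left; right; constructor <;> norm_num
    · constructor <;> norm_num
  have hset : {z : ℂ | 0 < z.re ∧ z ≠ 1} =
      (({z : ℂ | 0 < z.re ∧ 0 < z.im} ∪ {z : ℂ | 0 < z.re ∧ z.re < 1})
      ∪ {z : ℂ | 1 < z.re}) ∪ {z : ℂ | 0 < z.re ∧ z.im < 0} := by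
    ext z
    simp only [Set.mem_setOf_eq, Set.mem_union]
    constructor
    · rintro ⟨h0, h1⟩
      rcases lt_trichotomy z.re 1 with h | h | h
      · exact .inl (.inl (.inr ⟨h0, h⟩))
      · rcases lt_trichotomy z.im 0 with hi | hi | hi
        · exact .inr ⟨h0, hi⟩
        · exfalso; apply h1; apply Complex.ext <;> simp [h, hi]
        · exact .inl (.inl (.inl ⟨h0, hi⟩))
      · exact .inl (.inr h)
    · rintro (((⟨h0, hi⟩ | ⟨h0, hr⟩) | hr) | ⟨h0, hi⟩)
      · exact ⟨h0, fun h => by rw [h] at hi; simp at hi⟩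
      · exact ⟨h0, fun h => by rw [h] at hr; simp at hr⟩
      · refine ⟨by linarith, fun h => by rw [h] at hr; simp at hr⟩
      · exact ⟨h0, fun h => by rw [h] at hi; simp at hi⟩
  rw [hset]
  exact h3

lemma pzTerm_diffAt {k : ℕ} {s : ℂ} (h0 : 0 < s.re) (h1 : s ≠ 1) :
    DifferentiableAt ℂ (pzTerm k) s := by
  have hne : s + (k:ℂ) ≠ 1 := by
    intro h
    rcases Nat.eq_zero_or_pos k with hk | hk
    · subst hk; simp at h; exact h1 h
    · have := congrArg Complex.re h
      simp only [Complex.add_re, Complex.natCast_re, Complex.one_re] at this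
      have hk1 : (1:ℝ) ≤ (k:ℝ) := by exact_mod_cast hk
      linarith
  apply DifferentiableAt.mul
  · exact ((Polynomial.differentiable _).differentiableAt).div_const _
  · have : DifferentiableAt ℂ (fun z : ℂ => riemannZeta (z + k)) s :=
      (differentiableAt_riemannZeta hne).comp s (differentiableAt_id.add_const _)
    exact this.sub_const 1

lemma pzF_diffAt {s₀ : ℂ} (h0 : 0 < s₀.re) (h1 : s₀ ≠ 1) :
    DifferentiableAt ℂ (fun z => ∑' k : ℕ, pzTerm k z) s₀ := by
  have hd1 : (0:ℝ) < ‖s₀ - 1‖ := norm_pos_iff.mpr (sub_ne_zero.mpr h1)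
  set r : ℝ := min (s₀.re / 2) (‖s₀ - 1‖ / 2) with hr
  have hr0 : 0 < r := lt_min (by linarith) (by linarith)
  have hball : ∀ z ∈ ball s₀ r, 0 < z.re ∧ z ≠ 1 := by
    intro z hz
    rw [mem_ball, dist_eq_norm] at hz
    constructor
    · have h2 : |(z - s₀).re| ≤ ‖z - s₀‖ := Complex.abs_re_le_norm _
      have h3 : (z - s₀).re = z.re - s₀.re := by simp
      have h4 : r ≤ s₀.re / 2 := min_le_left _ _
      rw [h3] at h2
      have := abs_le.mp h2
      linarith
    · intro hz1
      subst hz1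
      have h4 : r ≤ ‖s₀ - 1‖ / 2 := min_le_right _ _
      rw [show (1:ℂ) - s₀ = -(s₀ - 1) by ring, norm_neg] at hz
      linarith
  set R : ℝ := ‖s₀‖ + r + 1 with hR
  have hRpos : 0 < R := by positivity
  set u : ℕ → ℝ :=
    fun k => (ascPochhammer ℝ (k+2)).eval R / (k+3).factorial * (2:ℝ)⁻¹ ^ (k+2) * Kc with hu
  have hus : Summable u := by
    have h := (summable_asc R hRpos).mul_right Kc
    have := (summable_nat_add_iff
      (f := fun k : ℕ => (ascPochhammer ℝ k).eval R / (k+1).factorial * (2:ℝ)⁻¹ ^ k * Kc) 2).mpr h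
    exact this
  have hbnd : ∀ (k : ℕ), ∀ z ∈ ball s₀ r, ‖pzTerm (k+2) z‖ ≤ u k := by
    intro k z hz
    obtain ⟨hz0, _⟩ := hball z hz
    have hzR : ‖z‖ ≤ R := by
      have : ‖z - s₀‖ < r := by rwa [mem_ball, dist_eq_norm] at hz
      calc ‖z‖ = ‖s₀ + (z - s₀)‖ := by ring_nf
        _ ≤ ‖s₀‖ + ‖z - s₀‖ := norm_add_le _ _
        _ ≤ R := by rw [hR]; linarith
    have h2 : 2 ≤ z.re + (k+2:ℕ) := by
      push_cast
      have : (0:ℝ) ≤ (k:ℝ) := Nat.cast_nonneg k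
      linarith
    exact term_bound h2 hz0.le hzR
  have hTdiff : DifferentiableOn ℂ (fun z => ∑' k : ℕ, pzTerm (k+2) z) (ball s₀ r) := by
    apply differentiableOn_tsum_of_summable_norm hus _ isOpen_ball hbnd
    intro k z hz
    obtain ⟨hz0, hz1⟩ := hball z hz
    exact (pzTerm_diffAt hz0 hz1).differentiableWithinAt
  have hsplit : ∀ z ∈ ball s₀ r,
      (∑' k : ℕ, pzTerm k z) = pzTerm 0 z + (pzTerm 1 z + ∑' k : ℕ, pzTerm (k+2) z) := by
    intro z hz
    have hsum2 : Summable (fun k => pzTerm (k+2) z) :=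
      Summable.of_norm_bounded hus (fun k => hbnd k z hz)
    have hsum1 : Summable (fun k => pzTerm (k+1) z) :=
      (summable_nat_add_iff (f := fun k => pzTerm (k+1) z) 1).mp hsum2
    have hsum0 : Summable (fun k => pzTerm k z) :=
      (summable_nat_add_iff (f := fun k => pzTerm k z) 1).mp hsum1
    rw [hsum0.tsum_eq_zero_add, hsum1.tsum_eq_zero_add]
  have hmem : ball s₀ r ∈ 𝓝 s₀ := isOpen_ball.mem_nhds (mem_ball_self hr0)
  have hdiff2 : DifferentiableAt ℂ
      (fun z => pzTerm 0 z + (pzTerm 1 z + ∑' k : ℕ, pzTerm (k+2) z)) s₀ := by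
    apply (pzTerm_diffAt h0 h1).add
    apply (pzTerm_diffAt h0 h1).add
    exact hTdiff.differentiableAt hmem
  have hev : (fun z => ∑' k : ℕ, pzTerm k z) =ᶠ[𝓝 s₀]
      (fun z => pzTerm 0 z + (pzTerm 1 z + ∑' k : ℕ, pzTerm (k+2) z)) :=
    eventually_of_mem hmem hsplit
  exact hev.differentiableAt_iff.mpr hdiff2

theorem pochhammer_zeta_identity (s : ℂ) (hs : 0 < s.re) (hs1 : s ≠ 1) :
    (∑' k : ℕ, (ascPochhammer ℂ k).eval s / ((k + 1).factorial : ℂ) *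
        (riemannZeta (s + k) - 1)) = 1 / (s - 1) := by
  set U : Set ℂ := {z : ℂ | 0 < z.re ∧ z ≠ 1} with hUdef
  have hUo : IsOpen U := by
    have h1 : IsOpen {z : ℂ | 0 < z.re} := isOpen_lt continuous_const Complex.continuous_re
    exact h1.inter isOpen_compl_singleton
  have hF : AnalyticOnNhd ℂ (fun z => ∑' k : ℕ, pzTerm k z) U := by
    apply DifferentiableOn.analyticOnNhd _ hUo
    exact fun z hz => (pzF_diffAt hz.1 hz.2).differentiableWithinAt
  have hG : AnalyticOnNhd ℂ (fun z : ℂ => 1 / (z - 1)) U := by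
    apply DifferentiableOn.analyticOnNhd _ hUo
    intro z hz
    have : DifferentiableAt ℂ (fun w : ℂ => 1 / (w - 1)) z :=
      (differentiableAt_const 1).div (differentiableAt_id.sub_const 1) (sub_ne_zero.mpr hz.2)
    exact this.differentiableWithinAt
  have h3U : (3:ℂ) ∈ U := by
    constructor
    · norm_num
    · intro h
      have := congrArg Complex.re h
      norm_num at this
  have hev : (fun z => ∑' k : ℕ, pzTerm k z) =ᶠ[𝓝 3] (fun z : ℂ => 1 / (z - 1)) := by
    have hV : {z : ℂ | 2 < z.re} ∈ 𝓝 (3:ℂ) := by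
      apply (isOpen_lt continuous_const Complex.continuous_re).mem_nhds
      norm_num
    exact eventually_of_mem hV fun z hz => key hz
  have := hF.eqOn_of_preconnected_of_eventuallyEq hG preconnected_U h3U hev (⟨hs, hs1⟩ : s ∈ U)
  exact this
end

section
/- The derivative of the Riemann zeta function at s = 0 satisfies ζ′(0) = −1 + (1/2) · ∑_{k=2}^{∞} ( (k−1) / (k(k+1)) ) · (ζ(k) − 1), the sum running over the integers k ≥ 2. -/
open Complex Real Filter Topology

noncomputable section

lemma zeta_eq_aux {s : ℂ} (hs : ‖s‖ < 1) :
    riemannZeta s = (s * completedRiemannZeta₀ s - 1 - s / (1 - s)) *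
      ((π : ℂ) ^ (s / 2) / (2 * Complex.Gamma (1 + s / 2))) := by
  rcases eq_or_ne s 0 with rfl | hs0
  · simp [riemannZeta_zero, Complex.Gamma_one]
    norm_num
  · have h1s : (1 : ℂ) - s ≠ 0 := by
      intro h
      rw [sub_eq_zero] at h
      rw [← h] at hs
      simp at hs
    have hs2 : s / 2 ≠ 0 := by simpa using hs0
    have hG : Complex.Gamma (s / 2) ≠ 0 := by
      apply Complex.Gamma_ne_zero
      intro m h
      rcases Nat.eq_zero_or_pos m with rfl | hm
      · rw [Nat.cast_zero, neg_zero] at h; exact hs2 h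
      · have h2 : ‖s / 2‖ < 1 := by
          rw [norm_div]
          simp only [Complex.norm_ofNat]
          nlinarith [norm_nonneg s]
        rw [h] at h2
        simp only [norm_neg, Complex.norm_natCast] at h2
        exact absurd h2 (by exact_mod_cast Nat.not_lt.mpr hm)
    have hpow : (π : ℂ) ^ (s / 2) ≠ 0 :=
      by simp [Complex.cpow_eq_zero_iff, Complex.ofReal_ne_zero.mpr Real.pi_ne_zero]
    have hG1 : Complex.Gamma (1 + s / 2) = (s / 2) * Complex.Gamma (s / 2) := by
      rw [add_comm]; exact Complex.Gamma_add_one _ hs2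
    rw [riemannZeta_def_of_ne_zero hs0, completedRiemannZeta_eq, Gammaℝ_def, hG1,
      show (-s / 2 : ℂ) = -(s / 2) by ring, Complex.cpow_neg]
    field_simp

end

noncomputable section

lemma deriv_zeta_zero : deriv riemannZeta 0 = -(Real.log (2 * π)) / 2 := by
  have hev : riemannZeta =ᶠ[𝓝 (0:ℂ)] fun s => (s * completedRiemannZeta₀ s - 1 - s / (1 - s)) *
      ((π : ℂ) ^ (s / 2) / (2 * Complex.Gamma (1 + s / 2))) := by
    filter_upwards [Metric.ball_mem_nhds (0:ℂ) one_pos] with s hs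
    exact zeta_eq_aux (by simpa using hs)
  rw [hev.deriv_eq]
  have h1 : HasDerivAt (fun s : ℂ => s * completedRiemannZeta₀ s - 1 - s / (1 - s))
      (completedRiemannZeta₀ 0 - 1) 0 := by
    have ha : HasDerivAt (fun s : ℂ => s * completedRiemannZeta₀ s)
        (completedRiemannZeta₀ 0) 0 := by
      have := (hasDerivAt_id (0:ℂ)).fun_mul (differentiable_completedZeta₀ 0).hasDerivAt
      simpa using this
    have hb : HasDerivAt (fun s : ℂ => s / (1 - s)) 1 0 := by
      have := (hasDerivAt_id (0:ℂ)).fun_div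
        ((hasDerivAt_const (0:ℂ) (1:ℂ)).fun_sub (hasDerivAt_id 0)) (by norm_num)
      simpa using this
    simpa using (ha.sub_const 1).fun_sub hb
  have h2 : HasDerivAt (fun s : ℂ => (π : ℂ) ^ (s / 2)) (Complex.log π / 2) 0 := by
    have := ((hasDerivAt_id (0:ℂ)).div_const 2).const_cpow
      (c := (π : ℂ)) (Or.inl (Complex.ofReal_ne_zero.mpr Real.pi_ne_zero))
    simpa [Complex.cpow_zero, div_eq_mul_inv, mul_comm] using this
  have h3 : HasDerivAt (fun s : ℂ => 2 * Complex.Gamma (1 + s / 2)) (-(Real.eulerMascheroniConstant:ℂ)) 0 := by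
    have hin : HasDerivAt (fun s : ℂ => 1 + s / 2) (1/2 : ℂ) 0 := by
      simpa using ((hasDerivAt_id (0:ℂ)).div_const 2).const_add 1
    have hg : HasDerivAt Complex.Gamma (-(Real.eulerMascheroniConstant:ℂ)) ((fun s : ℂ => 1 + s / 2) 0) := by
      simpa using Complex.hasDerivAt_Gamma_one
    have := (hg.comp 0 hin).const_mul (2:ℂ)
    exact this.congr_deriv (by ring)
  have h4 : HasDerivAt (fun s : ℂ => (π : ℂ) ^ (s / 2) / (2 * Complex.Gamma (1 + s / 2)))
      ((Complex.log π + Real.eulerMascheroniConstant) / 4) 0 := by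
    have := h2.div h3 (by simp [Complex.Gamma_one])
    refine this.congr_deriv ?_
    simp [Complex.Gamma_one]
    ring
  have h5 := h1.fun_mul h4
  rw [h5.deriv]
  have h0 : completedRiemannZeta₀ 0 = ((Real.eulerMascheroniConstant : ℂ) - Complex.log (4 * π)) / 2 + 1 := by
    rw [show (0:ℂ) = 1 - 1 by ring, completedRiemannZeta₀_one_sub, completedRiemannZeta₀_one]
  rw [h0]
  norm_num [Complex.Gamma_one]
  rw [show ((4:ℂ) * π) = ((4 * π : ℝ) : ℂ) by push_cast; ring,
    ← Complex.ofReal_log (by positivity : (0:ℝ) ≤ 4 * π),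
    ← Complex.ofReal_log Real.pi_pos.le]
  have l1 : Real.log (4 * π) = 2 * Real.log 2 + Real.log π := by
    rw [Real.log_mul (by norm_num) Real.pi_ne_zero, show (4:ℝ) = 2^2 by norm_num, Real.log_pow]
    push_cast; ring
  have l2 : Real.log (2 * π) = Real.log 2 + Real.log π := by
    rw [Real.log_mul (by norm_num) Real.pi_ne_zero]
  rw [l1, l2]
  push_cast
  ring

end


noncomputable section

/-- coefficient -/
def cfr (k : ℕ) : ℝ := ((k:ℝ)+1)/(((k:ℝ)+2)*((k:ℝ)+3))

lemma cfr_nonneg (k : ℕ) : 0 ≤ cfr k := by unfold cfr; positivity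

lemma inner_hasSum {x : ℝ} (hx0 : 0 < x) (hx1 : x < 1) :
    HasSum (fun k : ℕ => cfr k * x ^ (k + 2)) ((1 - 2 / x) * Real.log (1 - x) - 2) := by
  have habs : |x| < 1 := abs_lt.mpr ⟨by linarith, hx1⟩
  have h1 : HasSum (fun k : ℕ => x ^ (k + 1) / (k + 1)) (-Real.log (1 - x)) :=
    Real.hasSum_pow_div_log_of_abs_lt_one habs
  have h2 : HasSum (fun k : ℕ => x ^ (k + 2) / (k + 2)) (-Real.log (1 - x) - x) := by
    have h := (hasSum_nat_add_iff' (f := fun k : ℕ => x ^ (k + 1) / (k + 1)) 1).mpr h1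
    convert h using 1
    · rfl
    · funext k; push_cast; ring_nf
    · simp [Finset.sum_range_one]
  have h3 : HasSum (fun k : ℕ => x ^ (k + 3) / (k + 3)) (-Real.log (1 - x) - x - x ^ 2 / 2) := by
    have h := (hasSum_nat_add_iff' (f := fun k : ℕ => x ^ (k + 1) / (k + 1)) 2).mpr h1
    convert h using 1
    · rfl
    · funext k; push_cast; ring_nf
    · rw [Finset.sum_range_succ, Finset.sum_range_one]
      push_cast; ring
  have h4 := (h3.mul_left (2 / x)).sub h2
  convert h4 using 1
  · rfl
  · funext k
    unfold cfr
    have hk2 : ((k:ℝ)+2) ≠ 0 := by positivity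
    have hk3 : ((k:ℝ)+3) ≠ 0 := by positivity
    field_simp
    ring
  · field_simp
    ring

/-- the value of the inner sum for n -/
def Gfn (n : ℕ) : ℝ := (1 - 2 * ((n:ℝ) + 2)) * Real.log (1 - 1 / ((n:ℝ) + 2)) - 2

lemma fiber_hasSum (n : ℕ) :
    HasSum (fun k : ℕ => cfr k * (1 / ((n:ℝ) + 2)) ^ (k + 2)) (Gfn n) := by
  have hn : (0:ℝ) < (n:ℝ) + 2 := by positivity
  have := inner_hasSum (x := 1 / ((n:ℝ) + 2)) (by positivity) (by
    rw [div_lt_one hn]; linarith)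
  convert this using 2
  unfold Gfn
  rw [div_div_eq_mul_div]
  norm_num

end

noncomputable section

open Stirling in
lemma partial_sum_Gfn (N : ℕ) :
    ∑ n ∈ Finset.range N, Gfn n = 2 - Real.log 2 - 2 * Real.log (stirlingSeq (N + 1)) := by
  induction N with
  | zero =>
      rw [Finset.sum_range_zero, stirlingSeq_one, Real.log_div (Real.exp_ne_zero 1)
        (by positivity), Real.log_exp, Real.log_sqrt (by norm_num)]
      ring
  | succ N ih =>
      rw [Finset.sum_range_succ, ih]
      have key : Gfn N = 2 * Real.log (stirlingSeq (N + 1)) - 2 * Real.log (stirlingSeq (N + 2)) := by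
        have e1 := log_stirlingSeq_formula (N + 1)
        have e2 := log_stirlingSeq_formula (N + 2)
        have hM : (0:ℝ) < (N:ℝ) + 1 := by positivity
        have hM2 : (0:ℝ) < (N:ℝ) + 2 := by positivity
        have hfac : Real.log ((Nat.factorial (N + 2)) : ℝ) = Real.log ((Nat.factorial (N + 1)) : ℝ) + Real.log ((N:ℝ) + 2) := by
          rw [show (N + 2) = (N + 1) + 1 by ring, Nat.factorial_succ]
          push_cast
          rw [Real.log_mul (by positivity) (by positivity)]
          ring
        have c1 : ((N + 1 : ℕ) : ℝ) = (N:ℝ) + 1 := by push_cast; ring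
        have c2 : ((N + 2 : ℕ) : ℝ) = (N:ℝ) + 2 := by push_cast; ring
        rw [c1] at e1
        rw [c2, hfac] at e2
        have l1 : Real.log (2 * ((N:ℝ) + 1)) = Real.log 2 + Real.log ((N:ℝ) + 1) := by
          rw [Real.log_mul (by norm_num) (by positivity)]
        have l2 : Real.log (2 * ((N:ℝ) + 2)) = Real.log 2 + Real.log ((N:ℝ) + 2) := by
          rw [Real.log_mul (by norm_num) (by positivity)]
        have d1 : Real.log (((N:ℝ) + 1) / Real.exp 1) = Real.log ((N:ℝ) + 1) - 1 := by
          rw [Real.log_div (by positivity) (Real.exp_ne_zero 1), Real.log_exp]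
        have d2 : Real.log (((N:ℝ) + 2) / Real.exp 1) = Real.log ((N:ℝ) + 2) - 1 := by
          rw [Real.log_div (by positivity) (Real.exp_ne_zero 1), Real.log_exp]
        have g1 : Real.log (1 - 1 / ((N:ℝ) + 2)) = Real.log ((N:ℝ) + 1) - Real.log ((N:ℝ) + 2) := by
          rw [show (1 : ℝ) - 1 / ((N:ℝ) + 2) = ((N:ℝ) + 1) / ((N:ℝ) + 2) by field_simp; ring,
            Real.log_div (by positivity) (by positivity)]
        unfold Gfn
        rw [g1, e1, e2, l1, l2, d1, d2]
        push_cast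
        ring_nf
      rw [show N + 1 + 1 = N + 2 from rfl, key]
      ring

open Stirling in
lemma tendsto_partial_Gfn :
    Tendsto (fun N => ∑ n ∈ Finset.range N, Gfn n) atTop (𝓝 (2 - Real.log (2 * π))) := by
  have h1 : Tendsto (fun N : ℕ => stirlingSeq (N + 1)) atTop (𝓝 (Real.sqrt π)) :=
    tendsto_stirlingSeq_sqrt_pi.comp (tendsto_add_atTop_nat 1)
  have h2 : Tendsto (fun N : ℕ => Real.log (stirlingSeq (N + 1))) atTop
      (𝓝 (Real.log (Real.sqrt π))) :=
    ((Real.continuousAt_log (by positivity)).tendsto).comp h1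
  have h3 := ((tendsto_const_nhds (x := (2 - Real.log 2 : ℝ))).sub (h2.const_mul 2))
  have : 2 - Real.log 2 - 2 * Real.log (Real.sqrt π) = 2 - Real.log (2 * π) := by
    rw [Real.log_sqrt Real.pi_pos.le, Real.log_mul (by norm_num) Real.pi_ne_zero]
    ring
  rw [this] at h3
  refine h3.congr fun N => ?_
  rw [partial_sum_Gfn]

end

noncomputable section

lemma Gfn_nonneg (n : ℕ) : 0 ≤ Gfn n :=
  (fiber_hasSum n).nonneg fun k => by
    have := cfr_nonneg k; positivity

lemma summable_Gfn : Summable Gfn := by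
  refine summable_of_sum_range_le (c := 2 - Real.log (2 * π)) (fun n => Gfn_nonneg n)
    (fun n => ?_)
  have mono : Monotone (fun N => ∑ n ∈ Finset.range N, Gfn n) := by
    apply monotone_nat_of_le_succ
    intro N
    rw [Finset.sum_range_succ]
    have := Gfn_nonneg N
    linarith
  exact mono.ge_of_tendsto tendsto_partial_Gfn n

lemma hasSum_Gfn : HasSum Gfn (2 - Real.log (2 * π)) :=
  (summable_Gfn.hasSum_iff_tendsto_nat).mpr tendsto_partial_Gfn

def Ffn (n k : ℕ) : ℝ := cfr k * (1 / ((n:ℝ) + 2)) ^ (k + 2)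

lemma Ffn_nonneg (p : ℕ × ℕ) : 0 ≤ Ffn p.1 p.2 := by
  have := cfr_nonneg p.2
  unfold Ffn
  positivity

lemma summable_Ffn : Summable (fun p : ℕ × ℕ => Ffn p.1 p.2) := by
  rw [summable_prod_of_nonneg Ffn_nonneg]
  constructor
  · intro n; exact (fiber_hasSum n).summable
  · refine summable_Gfn.congr fun n => ?_
    exact ((fiber_hasSum n).tsum_eq).symm

def Zr (k : ℕ) : ℝ := ∑' n : ℕ, (1 / ((n:ℝ) + 2)) ^ (k + 2)

lemma summable_Zr (k : ℕ) : Summable fun n : ℕ => (1 / ((n:ℝ) + 2)) ^ (k + 2) := by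
  have h := ((summable_prod_of_nonneg (f := fun p : ℕ × ℕ => Ffn p.2 p.1)
    (fun p => Ffn_nonneg p.swap)).mp summable_Ffn.prod_symm).1 k
  have hc : cfr k ≠ 0 := by unfold cfr; positivity
  have := h.mul_left (cfr k)⁻¹
  refine this.congr fun n => ?_
  unfold Ffn
  field_simp

lemma hasSum_cZ : HasSum (fun k : ℕ => cfr k * Zr k) (2 - Real.log (2 * π)) := by
  have hswap := ((summable_prod_of_nonneg (f := fun p : ℕ × ℕ => Ffn p.2 p.1)
    (fun p => Ffn_nonneg p.swap)).mp summable_Ffn.prod_symm)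
  have hsummand : Summable fun k => cfr k * Zr k := by
    refine hswap.2.congr fun k => ?_
    show (∑' n : ℕ, Ffn n k) = cfr k * Zr k
    unfold Ffn Zr
    rw [tsum_mul_left]
  have ht : ∑' k, cfr k * Zr k = 2 - Real.log (2 * π) := by
    have e1 : ∀ k, cfr k * Zr k = ∑' n, Ffn n k := by
      intro k; unfold Ffn Zr; rw [tsum_mul_left]

    have comm := Summable.tsum_comm' (f := Ffn) summable_Ffn
      (fun n => (fiber_hasSum n).summable) (fun k => summable_Zr k |>.mul_left (cfr k))
    calc ∑' k, cfr k * Zr k = ∑' k, ∑' n, Ffn n k := by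
          exact tsum_congr e1
      _ = ∑' n, ∑' k, Ffn n k := comm
      _ = ∑' n, Gfn n := tsum_congr fun n => (fiber_hasSum n).tsum_eq
      _ = 2 - Real.log (2 * π) := hasSum_Gfn.tsum_eq
  exact hsummand.hasSum_iff.mpr ht

lemma zeta_sub_one (k : ℕ) : riemannZeta ((k:ℂ) + 2) - 1 = ((Zr k : ℝ) : ℂ) := by
  have hs : HasSum (fun n : ℕ => (1 / ((n:ℝ) + 2)) ^ (k + 2)) (Zr k) := (summable_Zr k).hasSum
  have h0 : HasSum (fun n : ℕ => (1 / (((n + 1 : ℕ):ℝ) + 1)) ^ (k + 2)) (Zr k) := by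
    convert hs using 2 with n
    push_cast; ring
  have hshift := (hasSum_nat_add_iff (f := fun n : ℕ => (1 / ((n:ℝ) + 1)) ^ (k + 2)) 1).mp h0
  rw [Finset.sum_range_one] at hshift
  norm_num at hshift
  have hc : HasSum (fun n : ℕ => 1 / ((n:ℂ) + 1) ^ (k + 2)) ((Zr k : ℂ) + 1) := by
    have := Complex.hasSum_ofReal.mpr hshift
    rw [Complex.ofReal_add, Complex.ofReal_one] at this
    refine this.congr_fun fun n => ?_
    push_cast
    rw [one_div]
  have hz : riemannZeta ((k:ℂ) + 2) = (Zr k : ℂ) + 1 := by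
    rw [zeta_eq_tsum_one_div_nat_add_one_cpow (by
      have h : ((k:ℂ) + 2).re = (k:ℝ) + 2 := by simp
      rw [h]
      have : (0:ℝ) ≤ (k:ℝ) := Nat.cast_nonneg k
      linarith)]
    rw [← hc.tsum_eq]
    refine tsum_congr fun n => ?_
    rw [show ((k:ℂ) + 2) = ((k + 2 : ℕ) : ℂ) by push_cast; ring, Complex.cpow_natCast]
  rw [hz]; ring

end


theorem deriv_zeta_zero_series :
    deriv riemannZeta 0 =
      -1 + (1 / 2) * ∑' k : ℕ, (((k : ℂ) + 2) - 1) / (((k : ℂ) + 2) * ((k : ℂ) + 3)) *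
        (riemannZeta ((k : ℂ) + 2) - 1) := by
  have hterm : ∀ k : ℕ, (((k : ℂ) + 2) - 1) / (((k : ℂ) + 2) * ((k : ℂ) + 3)) *
      (riemannZeta ((k : ℂ) + 2) - 1) = ((cfr k * Zr k : ℝ) : ℂ) := by
    intro k
    rw [zeta_sub_one k]
    unfold cfr
    push_cast
    ring
  rw [tsum_congr hterm, (Complex.hasSum_ofReal.mpr hasSum_cZ).tsum_eq, deriv_zeta_zero]
  push_cast
  have l2 : Real.log (2 * π) = Real.log 2 + Real.log π := by
    rw [Real.log_mul (by norm_num) Real.pi_ne_zero]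
  rw [l2]
  push_cast
  ring
end
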